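/- Let (H,·,∘,σ) be a Hopf truss over a field k, with (H,·,1,Δ,ε,S) the underlying Hopf algebra, and let x ∈ H be group-like. Define a ·_x b := a·S(x)·b and σ_x(a) := a∘x. Then (H,·_x) is a Hopf algebra with unit x and antipode S_x(a) = x·S(a)·x, σ_x is a coalgebra endomorphism of H, and (H,·_x,∘,σ_x) is a Hopf truss: a∘(b ·_x c) = (a₁∘b) ·_x S_x(σ_x(a₂)) ·_x (a₃∘c), i.e. a∘(b·S(x)·c) = (a₁∘b)·S(a₂∘x)·(a₃∘c) for all a,b,c ∈ H. -/
import Mathlib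


open TensorProduct

noncomputable section

variable (k : Type*) [Field k]

section Shuffles

variable (A B P Q R S : Type*)
  [AddCommGroup A] [Module k A] [AddCommGroup B] [Module k B]
  [AddCommGroup P] [Module k P] [AddCommGroup Q] [Module k Q]
  [AddCommGroup R] [Module k R] [AddCommGroup S] [Module k S]

/-- `(a ⊗ b) ⊗ ((p ⊗ q) ⊗ (r ⊗ s)) ↦ (a ⊗ (q ⊗ r)) ⊗ (b ⊗ (p ⊗ s))`, the shuffle appearing in
the compatibility of a Hopf-heap bracket with comultiplication:
`Δ([a,b,c]) = [a₁,b₂,c₁] ⊗ [a₂,b₁,c₂]`. -/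
def sweedlerShuffle :
    ((A ⊗[k] B) ⊗[k] ((P ⊗[k] Q) ⊗[k] (R ⊗[k] S))) →ₗ[k]
      ((A ⊗[k] (Q ⊗[k] R)) ⊗[k] (B ⊗[k] (P ⊗[k] S))) :=
  (tensorTensorTensorComm k A B (Q ⊗[k] R) (P ⊗[k] S)).toLinearMap ∘ₗ
    (TensorProduct.map LinearMap.id
      ((tensorTensorTensorComm k Q P R S).toLinearMap ∘ₗ
        TensorProduct.map (TensorProduct.comm k P Q).toLinearMap LinearMap.id))

/-- `u₁ ⊗ (u₂ ⊗ (u₃ ⊗ u₄)) ↦ (u₁ ⊗ (u₄ ⊗ u₂)) ⊗ u₃`, the shuffle appearing in the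
Rota–Baxter identity. -/
def rbShuffle :
    (A ⊗[k] (P ⊗[k] (Q ⊗[k] R))) →ₗ[k] ((A ⊗[k] (R ⊗[k] P)) ⊗[k] Q) :=
  (TensorProduct.assoc k A (R ⊗[k] P) Q).symm.toLinearMap ∘ₗ
    TensorProduct.map LinearMap.id
      ((TensorProduct.comm k Q (R ⊗[k] P)).toLinearMap ∘ₗ
        (TensorProduct.assoc k Q R P).toLinearMap ∘ₗ
        (TensorProduct.comm k P (Q ⊗[k] R)).toLinearMap)

end Shuffles

section Mul

variable {C : Type*} [AddCommGroup C] [Module k C]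

/-- Right multiplication `a ↦ μ (a ⊗ b)` by a fixed element, for a bilinear product `μ`. -/
def rmulBy (μ : (C ⊗[k] C) →ₗ[k] C) (b : C) : C →ₗ[k] C :=
  μ ∘ₗ ((TensorProduct.mk k C C).flip b)

end Mul

section Heap

variable {C : Type*} [AddCommGroup C] [Module k C] [Coalgebra k C]

/-- Iterated comultiplication `a ↦ a₁ ⊗ (a₂ ⊗ a₃)`. -/
def comul2 : C →ₗ[k] (C ⊗[k] (C ⊗[k] C)) :=
  (TensorProduct.map LinearMap.id Coalgebra.comul) ∘ₗ Coalgebra.comul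

/-- Iterated comultiplication `a ↦ a₁ ⊗ (a₂ ⊗ (a₃ ⊗ a₄))`. -/
def comul3 : C →ₗ[k] (C ⊗[k] (C ⊗[k] (C ⊗[k] C))) :=
  (TensorProduct.map LinearMap.id (comul2 k)) ∘ₗ Coalgebra.comul

/-- The pointwise ternary bracket `[a,b,c]` of a Hopf heap with structure map `χ`. -/
def br (χ : (C ⊗[k] (C ⊗[k] C)) →ₗ[k] C) (a b c : C) : C := χ (a ⊗ₜ[k] (b ⊗ₜ[k] c))

/-- `x` is a group-like element of the coalgebra `C`. -/
def IsGrouplike (x : C) : Prop :=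
  Coalgebra.comul (R := k) x = x ⊗ₜ[k] x ∧ Coalgebra.counit (R := k) x = 1

/-- `(C, Δ, ε, χ)` is a Hopf heap: `χ` is a coalgebra map `C ⊗ C^cop ⊗ C → C`
(counit and comultiplication conditions, the latter in the Sweedler form
`Δ([a,b,c]) = [a₁,b₂,c₁] ⊗ [a₂,b₁,c₂]`), the bracket is associative
(`[[a,b,c],d,h] = [a,b,[c,d,h]]`), and `[c₁,c₂,a] = ε(c)a = [a,c₁,c₂]`. -/
structure IsHopfHeap (χ : (C ⊗[k] (C ⊗[k] C)) →ₗ[k] C) : Prop where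
  counit_br : ∀ a b c : C,
    Coalgebra.counit (R := k) (br k χ a b c) =
      Coalgebra.counit (R := k) a * Coalgebra.counit (R := k) b * Coalgebra.counit (R := k) c
  comul_br : ∀ a b c : C,
    Coalgebra.comul (R := k) (br k χ a b c) =
      TensorProduct.map χ χ (sweedlerShuffle k C C C C C C
        ((Coalgebra.comul (R := k) a) ⊗ₜ[k]
          ((Coalgebra.comul (R := k) b) ⊗ₜ[k] (Coalgebra.comul (R := k) c))))
  assoc_br : ∀ a b c d h : C,
    br k χ (br k χ a b c) d h = br k χ a b (br k χ c d h)
  left_cancel : ∀ c a : C,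
    χ ((TensorProduct.assoc k C C C) ((Coalgebra.comul (R := k) c) ⊗ₜ[k] a)) =
      Coalgebra.counit (R := k) c • a
  right_cancel : ∀ c a : C,
    χ (a ⊗ₜ[k] (Coalgebra.comul (R := k) c)) = Coalgebra.counit (R := k) c • a

/-- `B` is a Rota–Baxter operator on the Hopf heap `(C, Δ, χ)`:
`B [a,b,c] = [B a, B b, B c]` and
`B(a₁) ⊗ B(a₂) = [B(a)₁, B(B(a)₄), B(B(a)₂)] ⊗ B(a)₃`. -/
structure IsRBOp (χ : (C ⊗[k] (C ⊗[k] C)) →ₗ[k] C) (B : C →ₗ[k] C) : Prop where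
  map_br : ∀ a b c : C, B (br k χ a b c) = br k χ (B a) (B b) (B c)
  rb : ∀ a : C,
    TensorProduct.map B B (Coalgebra.comul (R := k) a) =
      TensorProduct.map (χ ∘ₗ TensorProduct.map LinearMap.id (TensorProduct.map B B))
        LinearMap.id (rbShuffle k C C C C (comul3 k (B a)))

/-- The multiplication `a ·ₓ b = [a, x, b]` of the Hopf algebra `H_x(C)`, as a linear map. -/
def heapMul (χ : (C ⊗[k] (C ⊗[k] C)) →ₗ[k] C) (x : C) : (C ⊗[k] C) →ₗ[k] C :=
  χ ∘ₗ TensorProduct.map LinearMap.id (TensorProduct.mk k C C x)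

/-- The antipode `S_x(a) = [x, a, x]` of the Hopf algebra `H_x(C)`, as a linear map. -/
def heapAntipode (χ : (C ⊗[k] (C ⊗[k] C)) →ₗ[k] C) (x : C) : C →ₗ[k] C :=
  χ ∘ₗ (TensorProduct.mk k C (C ⊗[k] C) x) ∘ₗ ((TensorProduct.mk k C C).flip x)

end Heap

section HeapHom

variable {C D : Type*} [AddCommGroup C] [Module k C] [Coalgebra k C]
  [AddCommGroup D] [Module k D] [Coalgebra k D]

/-- `f` is a homomorphism of Hopf heaps: a coalgebra map preserving the bracket. -/
def IsHeapHom (χC : (C ⊗[k] (C ⊗[k] C)) →ₗ[k] C) (χD : (D ⊗[k] (D ⊗[k] D)) →ₗ[k] D)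
    (f : C →ₗ[k] D) : Prop :=
  (∀ a : C, Coalgebra.comul (R := k) (f a) = TensorProduct.map f f (Coalgebra.comul (R := k) a)) ∧
  (∀ a : C, Coalgebra.counit (R := k) (f a) = Coalgebra.counit (R := k) a) ∧
  (∀ a b c : C, f (br k χC a b c) = br k χD (f a) (f b) (f c))

end HeapHom

section HopfAlg

variable (H : Type*) [Ring H] [HopfAlgebra k H]

/-- The Hopf-heap structure map `a ⊗ b ⊗ c ↦ a · S(b) · c` of a Hopf algebra. -/
def hopfHeapChi : (H ⊗[k] (H ⊗[k] H)) →ₗ[k] H :=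
  (LinearMap.mul' k H) ∘ₗ TensorProduct.map LinearMap.id
    ((LinearMap.mul' k H) ∘ₗ TensorProduct.map (HopfAlgebra.antipode (R := k)) LinearMap.id)

/-- The triple multiplication `a ⊗ (b ⊗ c) ↦ a·(b·c)`. -/
def mulTriple : (H ⊗[k] (H ⊗[k] H)) →ₗ[k] H :=
  (LinearMap.mul' k H) ∘ₗ TensorProduct.map LinearMap.id (LinearMap.mul' k H)

end HopfAlg

end
set_option synthInstance.maxHeartbeats 1000000 in
set_option maxHeartbeats 4000000 in
/-- given a Hopf truss `(H,·,∘,σ)` and a group-like `x`, the operations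
`a ·ₓ b := a·S(x)·b`, `S_x(a) = x·S(a)·x` and `σ_x(a) := a∘x` make `(H, ·ₓ, ∘, σ_x)` a Hopf
truss, with `(H,·ₓ)` a Hopf algebra with unit `x`. -/
theorem hopfTruss_translate {k : Type*} [Field k] {H : Type*} [Ring H] [HopfAlgebra k H]
    (μ : (H ⊗[k] H) →ₗ[k] H) (σ : H →ₗ[k] H)
    -- `(H, ∘ = μ)` is a nonunital bialgebra
    (hassoc : ∀ a b c : H, μ (μ (a ⊗ₜ[k] b) ⊗ₜ[k] c) = μ (a ⊗ₜ[k] μ (b ⊗ₜ[k] c)))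
    (hcomul : ∀ a b : H, Coalgebra.comul (R := k) (μ (a ⊗ₜ[k] b)) =
      TensorProduct.map μ μ ((tensorTensorTensorComm k H H H H)
        ((Coalgebra.comul (R := k) a) ⊗ₜ[k] (Coalgebra.comul (R := k) b))))
    (hcounit : ∀ a b : H, Coalgebra.counit (R := k) (μ (a ⊗ₜ[k] b)) =
      Coalgebra.counit (R := k) a * Coalgebra.counit (R := k) b)
    -- `σ` is a coalgebra endomorphism
    (hσ1 : ∀ a : H, Coalgebra.comul (R := k) (σ a) =
      TensorProduct.map σ σ (Coalgebra.comul (R := k) a))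
    (hσ2 : ∀ a : H, Coalgebra.counit (R := k) (σ a) = Coalgebra.counit (R := k) a)
    -- truss condition `a∘(b·c) = (a₁∘b)·S(σ(a₂))·(a₃∘c)`
    (htruss : ∀ a b c : H, μ (a ⊗ₜ[k] (b * c)) =
      mulTriple k H ((TensorProduct.map (rmulBy k μ b)
        (TensorProduct.map ((HopfAlgebra.antipode (R := k)) ∘ₗ σ) (rmulBy k μ c)))
        (comul2 k a)))
    (x : H) (hx : IsGrouplike k x) :
    -- `·ₓ` is associative with two-sided unit `x`
    (∀ a b c : H, (a * HopfAlgebra.antipode (R := k) x * b) *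
        HopfAlgebra.antipode (R := k) x * c =
      a * HopfAlgebra.antipode (R := k) x * (b * HopfAlgebra.antipode (R := k) x * c)) ∧
    (∀ a : H, x * HopfAlgebra.antipode (R := k) x * a = a ∧
      a * HopfAlgebra.antipode (R := k) x * x = a) ∧
    -- `(H, ·ₓ)` is a bialgebra
    (∀ a b : H, Coalgebra.comul (R := k)
        ((LinearMap.mul' k H ∘ₗ TensorProduct.map
          (LinearMap.mulRight k (HopfAlgebra.antipode (R := k) x)) LinearMap.id)
          (a ⊗ₜ[k] b)) =
      TensorProduct.map
        (LinearMap.mul' k H ∘ₗ TensorProduct.map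
          (LinearMap.mulRight k (HopfAlgebra.antipode (R := k) x)) LinearMap.id)
        (LinearMap.mul' k H ∘ₗ TensorProduct.map
          (LinearMap.mulRight k (HopfAlgebra.antipode (R := k) x)) LinearMap.id)
        ((tensorTensorTensorComm k H H H H)
          ((Coalgebra.comul (R := k) a) ⊗ₜ[k] (Coalgebra.comul (R := k) b)))) ∧
    (∀ a b : H, Coalgebra.counit (R := k) (a * HopfAlgebra.antipode (R := k) x * b) =
      Coalgebra.counit (R := k) a * Coalgebra.counit (R := k) b) ∧
    -- `S_x(a) = x·S(a)·x` is an antipode for `·ₓ`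
    (∀ a : H,
      (LinearMap.mul' k H ∘ₗ TensorProduct.map
          (LinearMap.mulRight k (HopfAlgebra.antipode (R := k) x)) LinearMap.id)
        (TensorProduct.map
          ((LinearMap.mulLeft k x) ∘ₗ (LinearMap.mulRight k x) ∘ₗ
            (HopfAlgebra.antipode (R := k))) LinearMap.id (Coalgebra.comul (R := k) a)) =
        Coalgebra.counit (R := k) a • x ∧
      (LinearMap.mul' k H ∘ₗ TensorProduct.map
          (LinearMap.mulRight k (HopfAlgebra.antipode (R := k) x)) LinearMap.id)
        (TensorProduct.map LinearMap.id
          ((LinearMap.mulLeft k x) ∘ₗ (LinearMap.mulRight k x) ∘ₗ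
            (HopfAlgebra.antipode (R := k))) (Coalgebra.comul (R := k) a)) =
        Coalgebra.counit (R := k) a • x) ∧
    -- `σ_x(a) = a∘x` is a coalgebra endomorphism
    (∀ a : H, Coalgebra.comul (R := k) (rmulBy k μ x a) =
      TensorProduct.map (rmulBy k μ x) (rmulBy k μ x) (Coalgebra.comul (R := k) a)) ∧
    (∀ a : H, Coalgebra.counit (R := k) (rmulBy k μ x a) = Coalgebra.counit (R := k) a) ∧
    -- the new truss condition in explicit form: `a∘(b·S(x)·c) = (a₁∘b)·S(a₂∘x)·(a₃∘c)`
    (∀ a b c : H, μ (a ⊗ₜ[k] (b * HopfAlgebra.antipode (R := k) x * c)) =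
      mulTriple k H ((TensorProduct.map (rmulBy k μ b)
        (TensorProduct.map ((HopfAlgebra.antipode (R := k)) ∘ₗ (rmulBy k μ x))
          (rmulBy k μ c))) (comul2 k a))) := by
  obtain ⟨hxc, hxe⟩ := hx
  have hx1 : HopfAlgebra.antipode (R := k) x * x = 1 := by
    have h := HopfAlgebra.mul_antipode_rTensor_comul_apply (R := k) x
    rw [hxc] at h
    simpa [hxe] using h
  have hx2 : x * HopfAlgebra.antipode (R := k) x = 1 := by
    have h := HopfAlgebra.mul_antipode_lTensor_comul_apply (R := k) x
    rw [hxc] at h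
    simpa [hxe] using h
  have hcS : Coalgebra.comul (R := k) (HopfAlgebra.antipode (R := k) x) =
      HopfAlgebra.antipode (R := k) x ⊗ₜ[k] HopfAlgebra.antipode (R := k) x := by
    have h1 : Coalgebra.comul (R := k) (HopfAlgebra.antipode (R := k) x) * (x ⊗ₜ[k] x) = 1 := by
      rw [← hxc, ← Bialgebra.comul_mul, hx1, Bialgebra.comul_one]
    have h2 : (x ⊗ₜ[k] x) *
        (HopfAlgebra.antipode (R := k) x ⊗ₜ[k] HopfAlgebra.antipode (R := k) x) = 1 := by
      rw [Algebra.TensorProduct.tmul_mul_tmul, hx2, ← Algebra.TensorProduct.one_def]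
    exact left_inv_eq_right_inv h1 h2
  have heS : Coalgebra.counit (R := k) (HopfAlgebra.antipode (R := k) x) = 1 := by
    have h := Bialgebra.counit_mul (R := k) (HopfAlgebra.antipode (R := k) x) x
    rw [hx1, Bialgebra.counit_one, hxe, mul_one] at h
    exact h.symm
  have hrm : ∀ (c' w : H), rmulBy k μ c' w = μ (w ⊗ₜ[k] c') := fun _ _ => rfl
  -- `σ_x` is a coalgebra map
  have part6 : ∀ a : H, Coalgebra.comul (R := k) (rmulBy k μ x a) =
      TensorProduct.map (rmulBy k μ x) (rmulBy k μ x) (Coalgebra.comul (R := k) a) := by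
    intro a
    rw [hrm, hcomul a x, hxc]
    have claim : ∀ t : H ⊗[k] H,
        TensorProduct.map μ μ ((tensorTensorTensorComm k H H H H) (t ⊗ₜ[k] (x ⊗ₜ[k] x))) =
        TensorProduct.map (rmulBy k μ x) (rmulBy k μ x) t := by
      intro t
      induction t using TensorProduct.induction_on with
      | zero => simp
      | tmul u v => simp [tensorTensorTensorComm_tmul, hrm]
      | add a b ha hb => simp only [add_tmul, map_add, ha, hb]
    exact claim _
  have part7 : ∀ a : H, Coalgebra.counit (R := k) (rmulBy k μ x a) =
      Coalgebra.counit (R := k) a := by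
    intro a
    rw [hrm, hcounit, hxe, mul_one]
  refine ⟨?_, ?_, ?_, ?_, ?_, part6, part7, ?_⟩
  · intro a b c
    simp only [mul_assoc]
  · intro a
    constructor
    · rw [hx2, one_mul]
    · rw [mul_assoc, hx1, mul_one]
  · intro a b
    have happ : (LinearMap.mul' k H ∘ₗ TensorProduct.map
        (LinearMap.mulRight k (HopfAlgebra.antipode (R := k) x)) LinearMap.id)
        (a ⊗ₜ[k] b) = a * HopfAlgebra.antipode (R := k) x * b := by
      simp [LinearMap.mul'_apply]
    rw [happ, Bialgebra.comul_mul, Bialgebra.comul_mul, hcS]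
    have claim : ∀ t s : H ⊗[k] H,
        (t * (HopfAlgebra.antipode (R := k) x ⊗ₜ[k] HopfAlgebra.antipode (R := k) x)) * s =
        TensorProduct.map
          (LinearMap.mul' k H ∘ₗ TensorProduct.map
            (LinearMap.mulRight k (HopfAlgebra.antipode (R := k) x)) LinearMap.id)
          (LinearMap.mul' k H ∘ₗ TensorProduct.map
            (LinearMap.mulRight k (HopfAlgebra.antipode (R := k) x)) LinearMap.id)
          ((tensorTensorTensorComm k H H H H) (t ⊗ₜ[k] s)) := by
      intro t s
      induction t using TensorProduct.induction_on with
      | zero => simp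
      | tmul u v =>
        induction s using TensorProduct.induction_on with
        | zero => simp
        | tmul p q =>
          simp [Algebra.TensorProduct.tmul_mul_tmul, tensorTensorTensorComm_tmul,
            LinearMap.mul'_apply, mul_assoc]
        | add s1 s2 h1 h2 => simp only [mul_add, tmul_add, map_add, h1, h2]
      | add t1 t2 h1 h2 => simp only [add_mul, add_tmul, map_add, h1, h2]
    exact claim _ _
  · intro a b
    rw [Bialgebra.counit_mul, Bialgebra.counit_mul, heS, mul_one]
  · intro a
    have hxv : ∀ v : H, x * (HopfAlgebra.antipode (R := k) x * v) = v := fun v => by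
      rw [← mul_assoc, hx2, one_mul]
    have hxw : ∀ v : H, HopfAlgebra.antipode (R := k) x * (x * v) = v := fun v => by
      rw [← mul_assoc, hx1, one_mul]
    constructor
    · have h5a : ∀ t : H ⊗[k] H,
          (LinearMap.mul' k H ∘ₗ TensorProduct.map
            (LinearMap.mulRight k (HopfAlgebra.antipode (R := k) x)) LinearMap.id)
          (TensorProduct.map
            ((LinearMap.mulLeft k x) ∘ₗ (LinearMap.mulRight k x) ∘ₗ
              (HopfAlgebra.antipode (R := k))) LinearMap.id t) =
          x * (LinearMap.mul' k H (LinearMap.rTensor H (HopfAlgebra.antipode (R := k)) t)) := by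
        intro t
        induction t using TensorProduct.induction_on with
        | zero => simp
        | tmul u v =>
          simp [LinearMap.mul'_apply, mul_assoc, hxv]
        | add t1 t2 h1 h2 => simp only [map_add, h1, h2, mul_add]
      rw [h5a, HopfAlgebra.mul_antipode_rTensor_comul_apply, ← Algebra.commutes,
        ← Algebra.smul_def]
    · have h5b : ∀ t : H ⊗[k] H,
          (LinearMap.mul' k H ∘ₗ TensorProduct.map
            (LinearMap.mulRight k (HopfAlgebra.antipode (R := k) x)) LinearMap.id)
          (TensorProduct.map LinearMap.id
            ((LinearMap.mulLeft k x) ∘ₗ (LinearMap.mulRight k x) ∘ₗ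
              (HopfAlgebra.antipode (R := k))) t) =
          (LinearMap.mul' k H (LinearMap.lTensor H (HopfAlgebra.antipode (R := k)) t)) * x := by
        intro t
        induction t using TensorProduct.induction_on with
        | zero => simp
        | tmul u v =>
          simp [LinearMap.mul'_apply, mul_assoc, hxw]
        | add t1 t2 h1 h2 => simp only [map_add, h1, h2, add_mul]
      rw [h5b, HopfAlgebra.mul_antipode_lTensor_comul_apply, ← Algebra.smul_def]
  · -- the new truss condition
    intro a b c
    have star : rmulBy k μ c =
        (mulTriple k H ∘ₗ TensorProduct.map (rmulBy k μ x)
          (TensorProduct.map ((HopfAlgebra.antipode (R := k)) ∘ₗ σ)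
            (rmulBy k μ (HopfAlgebra.antipode (R := k) x * c)))) ∘ₗ comul2 k := by
      ext w
      have h := htruss w x (HopfAlgebra.antipode (R := k) x * c)
      rw [← mul_assoc, hx2, one_mul] at h
      simp only [LinearMap.comp_apply]
      rw [hrm]
      exact h
    have h0 := htruss a b (HopfAlgebra.antipode (R := k) x * c)
    rw [← mul_assoc] at h0
    rw [h0]
    have hconv : ∀ (G : (H ⊗[k] H) →ₗ[k] (H ⊗[k] H)) (a : H),
        mulTriple k H (TensorProduct.map (rmulBy k μ b) G (comul2 k a)) =
        LinearMap.mul' k H (TensorProduct.map (rmulBy k μ b)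
          (LinearMap.mul' k H ∘ₗ G ∘ₗ Coalgebra.comul) (Coalgebra.comul (R := k) a)) := by
      intro G a
      have haux : ∀ t : H ⊗[k] H,
          mulTriple k H (TensorProduct.map (rmulBy k μ b) G
            (TensorProduct.map LinearMap.id Coalgebra.comul t)) =
          LinearMap.mul' k H (TensorProduct.map (rmulBy k μ b)
            (LinearMap.mul' k H ∘ₗ G ∘ₗ Coalgebra.comul) t) := by
        intro t
        induction t using TensorProduct.induction_on with
        | zero => simp
        | tmul u v => simp [mulTriple, LinearMap.mul'_apply]
        | add t1 t2 h1 h2 => simp only [map_add, h1, h2]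
      simpa [comul2] using haux (Coalgebra.comul (R := k) a)
    rw [hconv, hconv]
    -- it remains to identify the two middle linear maps
    have nat : ∀ s : (H ⊗[k] H) ⊗[k] H,
        TensorProduct.map LinearMap.id (TensorProduct.map LinearMap.id (Coalgebra.comul (R := k)))
            ((TensorProduct.assoc k H H H) s) =
          (TensorProduct.assoc k H H (H ⊗[k] H))
            (TensorProduct.map LinearMap.id (Coalgebra.comul (R := k)) s) := by
      intro s
      induction s using TensorProduct.induction_on with
      | zero => simp
      | tmul t r =>
        induction t using TensorProduct.induction_on with
        | zero => simp
        | tmul p q => simp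
        | add a' b' ha hb => simp only [← ha, ← hb, add_tmul, map_add]
      | add a' b' ha hb => simp only [map_add, ha, hb]
    have coassoc4 : ∀ u : H,
        TensorProduct.map LinearMap.id (comul2 k) (Coalgebra.comul (R := k) u) =
        (TensorProduct.assoc k H H (H ⊗[k] H))
          (TensorProduct.map Coalgebra.comul Coalgebra.comul (Coalgebra.comul (R := k) u)) := by
      intro u
      have e1 : ∀ t : H ⊗[k] H, TensorProduct.map LinearMap.id (comul2 k) t =
          TensorProduct.map LinearMap.id (TensorProduct.map LinearMap.id Coalgebra.comul)
            (TensorProduct.map LinearMap.id Coalgebra.comul t) := by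
        intro t
        induction t using TensorProduct.induction_on with
        | zero => simp
        | tmul u v => simp [comul2]
        | add a' b' ha hb => simp only [map_add, ha, hb]
      have e2 : ∀ t : H ⊗[k] H, TensorProduct.map (Coalgebra.comul (R := k)) Coalgebra.comul t =
          TensorProduct.map LinearMap.id Coalgebra.comul
            (TensorProduct.map Coalgebra.comul LinearMap.id t) := by
        intro t
        induction t using TensorProduct.induction_on with
        | zero => simp
        | tmul u v => simp
        | add a' b' ha hb => simp only [map_add, ha, hb]
      rw [e1, e2]
      have e3 : TensorProduct.map (LinearMap.id : H →ₗ[k] H) Coalgebra.comul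
            (Coalgebra.comul (R := k) u) =
          (TensorProduct.assoc k H H H)
            (TensorProduct.map Coalgebra.comul LinearMap.id (Coalgebra.comul (R := k) u)) :=
        (Coalgebra.coassoc_apply u).symm
      rw [e3, nat]
    have hN : ∀ t s : H ⊗[k] H,
        LinearMap.mul' k H (TensorProduct.map
          ((HopfAlgebra.antipode (R := k)) ∘ₗ rmulBy k μ x)
          (mulTriple k H ∘ₗ TensorProduct.map (rmulBy k μ x)
            (TensorProduct.map ((HopfAlgebra.antipode (R := k)) ∘ₗ σ)
              (rmulBy k μ (HopfAlgebra.antipode (R := k) x * c))))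
          ((TensorProduct.assoc k H H (H ⊗[k] H)) (t ⊗ₜ[k] s))) =
        LinearMap.mul' k H (TensorProduct.map
          ((HopfAlgebra.antipode (R := k)) ∘ₗ rmulBy k μ x) (rmulBy k μ x) t) *
        LinearMap.mul' k H (TensorProduct.map
          ((HopfAlgebra.antipode (R := k)) ∘ₗ σ)
          (rmulBy k μ (HopfAlgebra.antipode (R := k) x * c)) s) := by
      intro t s
      induction t using TensorProduct.induction_on with
      | zero => simp
      | tmul u v =>
        induction s using TensorProduct.induction_on with
        | zero => simp
        | tmul p q =>
          simp [mulTriple, LinearMap.mul'_apply, mul_assoc]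
        | add s1 s2 h1 h2 => simp only [tmul_add, map_add, h1, h2, mul_add]
      | add t1 t2 h1 h2 => simp only [add_tmul, map_add, h1, h2, add_mul]
    have P1 : ∀ v : H,
        LinearMap.mul' k H (TensorProduct.map
          ((HopfAlgebra.antipode (R := k)) ∘ₗ rmulBy k μ x) (rmulBy k μ x)
          (Coalgebra.comul (R := k) v)) = Coalgebra.counit (R := k) v • (1 : H) := by
      intro v
      have e : ∀ t : H ⊗[k] H, TensorProduct.map
          ((HopfAlgebra.antipode (R := k)) ∘ₗ rmulBy k μ x) (rmulBy k μ x) t =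
          LinearMap.rTensor H (HopfAlgebra.antipode (R := k))
            (TensorProduct.map (rmulBy k μ x) (rmulBy k μ x) t) := by
        intro t
        induction t using TensorProduct.induction_on with
        | zero => simp
        | tmul u v => simp
        | add a' b' ha hb => simp only [map_add, ha, hb]
      rw [e, ← part6 v, HopfAlgebra.mul_antipode_rTensor_comul_apply, part7,
        Algebra.algebraMap_eq_smul_one]
    have glue : ∀ w : H ⊗[k] H,
        LinearMap.mul' k H (TensorProduct.map
          ((HopfAlgebra.antipode (R := k)) ∘ₗ rmulBy k μ x)
          (mulTriple k H ∘ₗ TensorProduct.map (rmulBy k μ x)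
            (TensorProduct.map ((HopfAlgebra.antipode (R := k)) ∘ₗ σ)
              (rmulBy k μ (HopfAlgebra.antipode (R := k) x * c))))
          ((TensorProduct.assoc k H H (H ⊗[k] H))
            (TensorProduct.map Coalgebra.comul Coalgebra.comul w))) =
        LinearMap.mul' k H (TensorProduct.map
          (LinearMap.mul' k H ∘ₗ (TensorProduct.map
            ((HopfAlgebra.antipode (R := k)) ∘ₗ rmulBy k μ x) (rmulBy k μ x)) ∘ₗ
              Coalgebra.comul)
          (LinearMap.mul' k H ∘ₗ (TensorProduct.map
            ((HopfAlgebra.antipode (R := k)) ∘ₗ σ)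
            (rmulBy k μ (HopfAlgebra.antipode (R := k) x * c))) ∘ₗ Coalgebra.comul) w) := by
      intro w
      induction w using TensorProduct.induction_on with
      | zero => simp
      | tmul p q =>
        simp only [TensorProduct.map_tmul, LinearMap.comp_apply, LinearMap.mul'_apply]
        exact hN _ _
      | add w1 w2 h1 h2 => simp only [map_add, h1, h2]
    have collapse : ∀ w : H ⊗[k] H,
        LinearMap.mul' k H (TensorProduct.map
          (LinearMap.mul' k H ∘ₗ (TensorProduct.map
            ((HopfAlgebra.antipode (R := k)) ∘ₗ rmulBy k μ x) (rmulBy k μ x)) ∘ₗ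
              Coalgebra.comul)
          (LinearMap.mul' k H ∘ₗ (TensorProduct.map
            ((HopfAlgebra.antipode (R := k)) ∘ₗ σ)
            (rmulBy k μ (HopfAlgebra.antipode (R := k) x * c))) ∘ₗ Coalgebra.comul) w) =
        (LinearMap.mul' k H ∘ₗ (TensorProduct.map
            ((HopfAlgebra.antipode (R := k)) ∘ₗ σ)
            (rmulBy k μ (HopfAlgebra.antipode (R := k) x * c))) ∘ₗ Coalgebra.comul)
          ((TensorProduct.lid k H)
            (LinearMap.rTensor H (Coalgebra.counit (R := k)) w)) := by
      intro w
      induction w using TensorProduct.induction_on with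
      | zero => simp
      | tmul p q =>
        simp only [TensorProduct.map_tmul, LinearMap.comp_apply, LinearMap.mul'_apply,
          LinearMap.rTensor_tmul, TensorProduct.lid_tmul, map_smul]
        rw [P1, smul_mul_assoc, one_mul]
      | add w1 w2 h1 h2 => simp only [map_add, h1, h2]
    have key : ∀ u : H,
        LinearMap.mul' k H (TensorProduct.map
          ((HopfAlgebra.antipode (R := k)) ∘ₗ rmulBy k μ x) (rmulBy k μ c)
          (Coalgebra.comul (R := k) u)) =
        LinearMap.mul' k H (TensorProduct.map
          ((HopfAlgebra.antipode (R := k)) ∘ₗ σ)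
          (rmulBy k μ (HopfAlgebra.antipode (R := k) x * c))
          (Coalgebra.comul (R := k) u)) := by
      intro u
      have s1 : ∀ t : H ⊗[k] H, TensorProduct.map
          ((HopfAlgebra.antipode (R := k)) ∘ₗ rmulBy k μ x) (rmulBy k μ c) t =
          TensorProduct.map ((HopfAlgebra.antipode (R := k)) ∘ₗ rmulBy k μ x)
            (mulTriple k H ∘ₗ TensorProduct.map (rmulBy k μ x)
              (TensorProduct.map ((HopfAlgebra.antipode (R := k)) ∘ₗ σ)
                (rmulBy k μ (HopfAlgebra.antipode (R := k) x * c))))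
            (TensorProduct.map LinearMap.id (comul2 k) t) := by
        intro t
        induction t using TensorProduct.induction_on with
        | zero => simp
        | tmul u v =>
          simp only [TensorProduct.map_tmul, LinearMap.id_coe, id_eq]
          rw [star]
          rfl
        | add a' b' ha hb => simp only [map_add, ha, hb]
      rw [s1, coassoc4, glue, collapse, Coalgebra.rTensor_counit_comul]
      simp only [TensorProduct.lid_tmul, one_smul, LinearMap.comp_apply]
    have E : (LinearMap.mul' k H ∘ₗ (TensorProduct.map
          ((HopfAlgebra.antipode (R := k)) ∘ₗ rmulBy k μ x) (rmulBy k μ c)) ∘ₗ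
            Coalgebra.comul : H →ₗ[k] H) =
        LinearMap.mul' k H ∘ₗ (TensorProduct.map
          ((HopfAlgebra.antipode (R := k)) ∘ₗ σ)
          (rmulBy k μ (HopfAlgebra.antipode (R := k) x * c))) ∘ₗ Coalgebra.comul := by
      ext u
      simpa using key u
    rw [E]
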